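/- Every [[n,1,3]] stabilizer code is an [[n−1,1,3;1]] entanglement-assisted code with any qubit serving as Bob's half of the ebit. Precisely: let n ≥ 3 and let S ⊆ (ZMod 2)^n × (ZMod 2)^n be an isotropic subspace of dimension n−1 such that S contains no element of qubit weight 1 (the code is nontrivial on every qubit) and every element of S^⊥ of qubit weight at most 2 lies in S (the code corrects an arbitrary single-qubit error). Then for every qubit index j there exists a basis b₁, …, b_{n−1} of S such that the qubit-j component (x_j, z_j) of b₁ equals (1,0) (a single X), the qubit-j component of b₂ equals (0,1) (a single Z), and the qubit-j component of every other basis element equals (0,0) (identity). -/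

import Mathlib

/-- An `n`-qubit Pauli operator modulo phase: the pair `(x|z)` of X-components
and Z-components. -/
abbrev PauliVec (n : ℕ) := (Fin n → ZMod 2) × (Fin n → ZMod 2)

/-- The symplectic product of `(x|z)` and `(x'|z')`, namely `x·z' + z·x'`.
Two Pauli operators commute iff their symplectic product is `0`. -/
def symp {n : ℕ} (v w : PauliVec n) : ZMod 2 :=
  (∑ i, v.1 i * w.2 i) + ∑ i, v.2 i * w.1 i

/-- The qubit weight of `(x|z)`: the number of qubits on which the Pauli
operator acts nontrivially. -/
def qwt {n : ℕ} (v : PauliVec n) : ℕ :=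
  (Finset.univ.filter fun i => (v.1 i, v.2 i) ≠ (0, 0)).card

/-- Every [[n,1,3]] stabilizer code is an [[n-1,1,3;1]] entanglement-assisted
code with any qubit serving as Bob's half of the ebit: if `S` is an isotropic
subspace of dimension `n-1` containing no element of qubit weight 1 and such
that every element of `S^⊥` of qubit weight at most 2 lies in `S`, then for
every qubit index `j` there is a basis of `S` whose first element restricts to
an `X` on qubit `j`, whose second element restricts to a `Z` on qubit `j`, and
all of whose other elements restrict to the identity on qubit `j`. -/
private lemma z2_cases (a : ZMod 2) : a = 0 ∨ a = 1 := by revert a; decide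

private lemma z2_add11 : (1 : ZMod 2) + 1 = 0 := by decide

private lemma z2_add10 : (1 : ZMod 2) + 0 = 1 := by decide

private lemma z2_add01 : (0 : ZMod 2) + 1 = 1 := by decide

private lemma z2_add00 : (0 : ZMod 2) + 0 = 0 := by decide

private def ebEquiv (n : ℕ) (hn : 3 ≤ n) : (Fin 2 ⊕ Fin (n - 3)) ≃ Fin (n - 1) where
  toFun := Sum.elim (fun k => ⟨k.val, by omega⟩) (fun k => ⟨k.val + 2, by omega⟩)
  invFun i := if h : (i : ℕ) < 2 then Sum.inl ⟨i, h⟩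
    else Sum.inr ⟨(i : ℕ) - 2, by omega⟩
  left_inv := by
    rintro (k | k) <;> simp only [Sum.elim_inl, Sum.elim_inr]
    · exact dif_pos k.isLt
    · refine (dif_neg (show ¬((k : ℕ) + 2 < 2) by
        omega)).trans ?_
      exact congrArg Sum.inr (Fin.ext (show (k : ℕ) + 2 - 2 = (k : ℕ) by omega))
  right_inv := by
    intro i
    beta_reduce
    by_cases h : (i : ℕ) < 2
    · rw [dif_pos h]
      simp only [Sum.elim_inl]
    · rw [dif_neg h]
      simp only [Sum.elim_inr]
      exact Fin.ext (show (i : ℕ) - 2 + 2 = (i : ℕ) by omega)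

private lemma ebEquiv_symm (n : ℕ) (hn : 3 ≤ n) (i : Fin (n - 1)) :
    (ebEquiv n hn).symm i = if h : (i : ℕ) < 2 then Sum.inl ⟨i, h⟩
      else Sum.inr ⟨(i : ℕ) - 2, by omega⟩ := rfl

set_option maxHeartbeats 1000000 in
theorem stabilizer_code_gives_EA_code (n : ℕ) (hn : 3 ≤ n)
    (S : Submodule (ZMod 2) (PauliVec n))
    (hiso : ∀ a ∈ S, ∀ b ∈ S, symp a b = 0)
    (hdim : Module.finrank (ZMod 2) S = n - 1)
    (hwt1 : ∀ v ∈ S, qwt v ≠ 1)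
    (hdist : ∀ v : PauliVec n, (∀ s ∈ S, symp v s = 0) → qwt v ≤ 2 → v ∈ S) :
    ∀ j : Fin n, ∃ b : Module.Basis (Fin (n - 1)) (ZMod 2) S,
      ∀ i : Fin (n - 1),
        ((b i : PauliVec n).1 j, (b i : PauliVec n).2 j) =
          if (i : ℕ) = 0 then ((1 : ZMod 2), (0 : ZMod 2))
          else if (i : ℕ) = 1 then (0, 1) else (0, 0) := by
  haveI : Fact (Nat.Prime 2) := ⟨Nat.prime_two⟩
  intro j
  -- The projection of `S` onto the `(x_j, z_j)` components.
  set f : S →ₗ[ZMod 2] (ZMod 2 × ZMod 2) :=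
    { toFun := fun s => ((s : PauliVec n).1 j, (s : PauliVec n).2 j)
      map_add' := fun a b => rfl
      map_smul' := fun c a => rfl } with hf
  have e2 := z2_cases
  -- Claim A: every nonzero single-qubit form at `j` is nonzero on some element of `S`.
  have claimA : ∀ c d : ZMod 2, ¬(c = 0 ∧ d = 0) →
      ∃ s ∈ S, c * s.2 j + d * s.1 j ≠ 0 := by
    intro c d hcd
    by_contra h
    push_neg at h
    have hsymp : ∀ s ∈ S,
        symp ((fun i => if i = j then c else 0, fun i => if i = j then d else 0) :
          PauliVec n) s = 0 := by
      intro s hs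
      have := h s hs
      simpa [symp, ite_mul, Finset.sum_ite_eq'] using this
    have hq : qwt ((fun i => if i = j then c else 0, fun i => if i = j then d else 0) :
        PauliVec n) = 1 := by
      have hfil : (Finset.univ.filter fun i : Fin n =>
          (((if i = j then c else 0 : ZMod 2), (if i = j then d else 0 : ZMod 2)) ≠
            ((0 : ZMod 2), (0 : ZMod 2)))) = {j} := by
        ext i
        by_cases hij : i = j <;> simp [hij, Prod.ext_iff]
        tauto
      simp only [qwt]
      rw [hfil]
      simp
    have hmem := hdist _ hsymp (by rw [hq]; omega)
    exact hwt1 _ hmem hq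
  obtain ⟨s, hsS, hs⟩ := claimA 1 0 (by simp)
  obtain ⟨t, htS, ht⟩ := claimA 0 1 (by simp)
  obtain ⟨u, huS, hu⟩ := claimA 1 1 (by simp)
  simp only [one_mul, zero_mul, add_zero, zero_add] at hs ht hu
  have hs2 : s.2 j = 1 := (e2 _).resolve_left hs
  have ht1 : t.1 j = 1 := (e2 _).resolve_left ht
  -- find elements of `S` that are a pure `X` and a pure `Z` on qubit `j`.
  have key : ∃ vX ∈ S, ∃ vZ ∈ S,
      vX.1 j = 1 ∧ vX.2 j = 0 ∧ vZ.1 j = 0 ∧ vZ.2 j = 1 := by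
    rcases e2 (s.1 j) with h1 | h1
    · rcases e2 (t.2 j) with h2 | h2
      · exact ⟨t, htS, s, hsS, ht1, h2, h1, hs2⟩
      · refine ⟨t + s, S.add_mem htS hsS, s, hsS, ?_, ?_, h1, hs2⟩
        · show t.1 j + s.1 j = 1; rw [ht1, h1]; exact z2_add10
        · show t.2 j + s.2 j = 0; rw [h2, hs2]; exact z2_add11
    · rcases e2 (u.1 j) with h3 | h3
      · have h4 : u.2 j = 1 := by
          rcases e2 (u.2 j) with h4 | h4
          · exfalso; apply hu; rw [h3, h4]; exact z2_add00
          · exact h4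
        refine ⟨s + u, S.add_mem hsS huS, u, huS, ?_, ?_, h3, h4⟩
        · show s.1 j + u.1 j = 1; rw [h1, h3]; exact z2_add10
        · show s.2 j + u.2 j = 0; rw [hs2, h4]; exact z2_add11
      · have h4 : u.2 j = 0 := by
          rcases e2 (u.2 j) with h4 | h4
          · exact h4
          · exfalso; apply hu; rw [h3, h4]; exact z2_add11
        refine ⟨u, huS, s + u, S.add_mem hsS huS, h3, h4, ?_, ?_⟩
        · show s.1 j + u.1 j = 0; rw [h1, h3]; exact z2_add11
        · show s.2 j + u.2 j = 1; rw [hs2, h4]; exact z2_add10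
  obtain ⟨vX, hvXS, vZ, hvZS, hX1, hX2, hZ1, hZ2⟩ := key
  set sX : S := ⟨vX, hvXS⟩ with hsX
  set sZ : S := ⟨vZ, hvZS⟩ with hsZ
  have hfX : f sX = (1, 0) := by
    show (vX.1 j, vX.2 j) = (1, 0)
    rw [hX1, hX2]
  have hfZ : f sZ = (0, 1) := by
    show (vZ.1 j, vZ.2 j) = (0, 1)
    rw [hZ1, hZ2]
  -- `f` is surjective.
  have hrange : LinearMap.range f = ⊤ := by
    rw [eq_top_iff]
    rintro ⟨a, b⟩ -
    have hab : ((a, b) : ZMod 2 × ZMod 2) =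
        a • ((1 : ZMod 2), (0 : ZMod 2)) + b • ((0 : ZMod 2), (1 : ZMod 2)) := by
      simp [Prod.ext_iff]
    rw [hab]
    exact add_mem (Submodule.smul_mem _ _ (LinearMap.mem_range.2 ⟨sX, hfX⟩))
      (Submodule.smul_mem _ _ (LinearMap.mem_range.2 ⟨sZ, hfZ⟩))
  have hker : Module.finrank (ZMod 2) (LinearMap.ker f) = n - 3 := by
    have h1 := LinearMap.finrank_range_add_finrank_ker f
    rw [hrange, finrank_top] at h1
    have h2 : Module.finrank (ZMod 2) (ZMod 2 × ZMod 2) = 2 := by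
      simp [Module.finrank_prod]
    rw [h2, hdim] at h1
    omega
  -- a basis of the kernel
  set bK : Module.Basis (Fin (n - 3)) (ZMod 2) (LinearMap.ker f) :=
    Module.finBasisOfFinrankEq (ZMod 2) _ hker with hbK
  -- linear independence of the combined family
  have hli1 : LinearIndependent (ZMod 2) ![sX, sZ] := by
    rw [LinearIndependent.pair_iff]
    intro a b hab
    have h0 : f (a • sX + b • sZ) = 0 := by rw [hab]; simp
    rw [map_add, map_smul, map_smul, hfX, hfZ] at h0
    simpa [Prod.ext_iff] using h0
  have hli2 : LinearIndependent (ZMod 2)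
      (fun k : Fin (n - 3) => ((bK k : LinearMap.ker f) : S)) :=
    bK.linearIndependent.map' (LinearMap.ker f).subtype (Submodule.ker_subtype _)
  have hd : Disjoint (Submodule.span (ZMod 2) (Set.range ![sX, sZ]))
      (Submodule.span (ZMod 2)
        (Set.range fun k : Fin (n - 3) => ((bK k : LinearMap.ker f) : S))) := by
    rw [Submodule.disjoint_def]
    intro x hx1 hx2
    have hxk : x ∈ LinearMap.ker f := by
      have hle : Submodule.span (ZMod 2)
          (Set.range fun k : Fin (n - 3) => ((bK k : LinearMap.ker f) : S)) ≤
            LinearMap.ker f := by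
        rw [Submodule.span_le]
        rintro _ ⟨k, rfl⟩
        exact (bK k).2
      exact hle hx2
    rw [Matrix.range_cons_cons_empty] at hx1
    obtain ⟨a, b, rfl⟩ := Submodule.mem_span_pair.1 hx1
    have h0 : f (a • sX + b • sZ) = 0 := hxk
    rw [map_add, map_smul, map_smul, hfX, hfZ] at h0
    have hab : a = 0 ∧ b = 0 := by simpa [Prod.ext_iff] using h0
    rw [hab.1, hab.2]
    simp
  have hli := hli1.sum_type hli2 hd
  have hcard : Fintype.card (Fin 2 ⊕ Fin (n - 3)) = Module.finrank (ZMod 2) S := by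
    simp only [Fintype.card_sum, Fintype.card_fin, hdim]
    omega
  set b0 := basisOfLinearIndependentOfCardEqFinrank hli hcard with hb0
  -- the reindexing equivalence
  set e := ebEquiv n hn with he
  refine ⟨b0.reindex e, ?_⟩
  intro i
  rw [Module.Basis.reindex_apply]
  have hcoe : ⇑b0 = Sum.elim ![sX, sZ]
      (fun k : Fin (n - 3) => ((bK k : LinearMap.ker f) : S)) :=
    coe_basisOfLinearIndependentOfCardEqFinrank hli hcard
  rw [hcoe]
  have hesymm := ebEquiv_symm n hn
  by_cases h0 : (i : ℕ) = 0
  · have hlt : (i : ℕ) < 2 := by omega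
    rw [hesymm i, dif_pos hlt]
    have hz : (⟨(i : ℕ), hlt⟩ : Fin 2) = 0 := Fin.ext h0
    rw [hz]
    simp only [Sum.elim_inl, Matrix.cons_val_zero]
    rw [if_pos h0]
    show (vX.1 j, vX.2 j) = (1, 0)
    rw [hX1, hX2]
  · by_cases h1 : (i : ℕ) = 1
    · have hlt : (i : ℕ) < 2 := by omega
      rw [hesymm i, dif_pos hlt]
      have hz : (⟨(i : ℕ), hlt⟩ : Fin 2) = 1 := Fin.ext h1
      rw [hz]
      simp only [Sum.elim_inl, Matrix.cons_val_one, Matrix.head_cons]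
      rw [if_neg h0, if_pos h1]
      show (vZ.1 j, vZ.2 j) = (0, 1)
      rw [hZ1, hZ2]
    · rw [hesymm i, dif_neg (by omega)]
      simp only [Sum.elim_inr]
      rw [if_neg h0, if_neg h1]
      have hk := (bK ⟨(i : ℕ) - 2, by omega⟩).2
      rw [LinearMap.mem_ker] at hk
      exact hk
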